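/- Let E be a real Hilbert space, Z a real normed space, ε > 0, and g : E × Z → ℝ such that for each z ∈ Z, θ ↦ g(θ,z) is convex, L-Lipschitz and differentiable, ‖∇_θ g(θ1,z) − ∇_θ g(θ2,z)‖ ≤ L_θ‖θ1 − θ2‖ for all z, and ‖∇_θ g(θ,z1) − ∇_θ g(θ,z2)‖ ≤ L_z‖z1 − z2‖ for all θ. Define the adversarial loss h(θ,z) = sup_{‖z' − z‖ ≤ ε} g(θ,z'), and assume for each z that θ ↦ h(θ,z) is differentiable with ∇_θ h(θ,z) = ∇_θ g(θ, a(θ,z)) where a(θ,z) is a maximizer of g(θ,·) over the closed ε-ball around z. Let S, S' ∈ Zⁿ differ in exactly one coordinate and run SGD on h with step sizes 0 < α_t ≤ 1/L_θ from a common initialization, with trajectories indexed by i ∈ (Fin n)^T as θ_S^{t+1}(i) = θ_S^t(i) − α_{t+1}∇_θ h(θ_S^t(i), S_{i_{t+1}}). Then for every z ∈ Z, n^{−T} ∑_{i ∈ (Fin n)^T} |h(θ_S^T(i), z) − h(θ_{S'}^T(i), z)| ≤ (2 L L_z ε + 2L²/n) ∑_{t=1}^T α_t. -/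

import Mathlib

open scoped RealInnerProductSpace

section aux

variable {E : Type*} [NormedAddCommGroup E] [InnerProductSpace ℝ E] [CompleteSpace E]

lemma aux_grad_norm_le {f : E → ℝ} {D : E} {x : E} {L : ℝ} (hL : 0 ≤ L)
    (hf : HasGradientAt f D x) (hlip : ∀ a b : E, |f a - f b| ≤ L * ‖a - b‖) :
    ‖D‖ ≤ L := by
  have h1 : ‖InnerProductSpace.toDual ℝ E D‖ ≤ L := by
    apply (hf.hasFDerivAt).le_of_lip' hL
    filter_upwards with a
    simpa [Real.norm_eq_abs] using hlip a x
  simpa using h1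

lemma aux_first_order {f : E → ℝ} {D : E → E}
    (hconv : ConvexOn ℝ Set.univ f)
    (hgrad : ∀ x, HasGradientAt f (D x) x) (x y : E) :
    f x + ⟪D x, y - x⟫ ≤ f y := by
  set φ : ℝ → ℝ := fun t => f (x + t • (y - x)) with hφ
  have hc : HasDerivAt φ ⟪D (x + (0:ℝ) • (y - x)), y - x⟫ 0 := by
    have hcurve : HasDerivAt (fun t : ℝ => x + t • (y - x)) (y - x) 0 := by
      simpa using ((hasDerivAt_id (0:ℝ)).smul_const (y - x)).const_add x
    have hf := (hgrad (x + (0:ℝ) • (y - x))).hasFDerivAt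
    have := hf.comp_hasDerivAt 0 hcurve
    simpa [InnerProductSpace.toDual_apply_apply, hφ, Function.comp_def] using this
  have hφconv : ConvexOn ℝ Set.univ φ := by
    have h2 := hconv.comp_affineMap (AffineMap.lineMap x y : ℝ →ᵃ[ℝ] E)
    have : φ = f ∘ (AffineMap.lineMap x y : ℝ →ᵃ[ℝ] E) := by
      funext t
      simp [hφ, AffineMap.lineMap_apply, add_comm]
    rw [this]
    simpa using h2
  have hslope := hφconv.le_slope_of_hasDerivAt (Set.mem_univ (0:ℝ)) (Set.mem_univ (1:ℝ))
      one_pos hc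
  have hφ0 : φ 0 = f x := by simp [hφ]
  have hφ1 : φ 1 = f y := by simp [hφ]
  have hD0 : (x + (0:ℝ) • (y - x)) = x := by simp
  rw [slope_def_field] at hslope
  rw [hD0] at hslope
  rw [hφ0, hφ1] at hslope
  simp at hslope
  linarith

lemma aux_descent {f : E → ℝ} {D : E → E} {Lθ : ℝ} (hLθ : 0 ≤ Lθ)
    (hgrad : ∀ x, HasGradientAt f (D x) x)
    (hlip : ∀ a b : E, ‖D a - D b‖ ≤ Lθ * ‖a - b‖) (x y : E) :
    f y ≤ f x + ⟪D x, y - x⟫ + Lθ * ‖y - x‖ ^ 2 := by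
  have hseg : Convex ℝ (segment ℝ x y) := convex_segment x y
  have hbound : ∀ z ∈ segment ℝ x y,
      ‖InnerProductSpace.toDual ℝ E (D z) - InnerProductSpace.toDual ℝ E (D x)‖
        ≤ Lθ * ‖y - x‖ := by
    intro z hz
    rw [← map_sub]
    rw [(InnerProductSpace.toDual ℝ E).norm_map]
    refine (hlip z x).trans ?_
    apply mul_le_mul_of_nonneg_left _ hLθ
    obtain ⟨a, b, ha, hb, hab, rfl⟩ := hz
    have : a • x + b • y - x = b • (y - x) := by
      have hax : a = 1 - b := by linarith
      rw [hax]; module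
    rw [this, norm_smul, Real.norm_eq_abs, abs_of_nonneg hb]
    nlinarith [norm_nonneg (y - x)]
  have hmain := hseg.norm_image_sub_le_of_norm_hasFDerivWithin_le'
      (fun z _ => ((hgrad z).hasFDerivAt).hasFDerivWithinAt) hbound
      (left_mem_segment ℝ x y) (right_mem_segment ℝ x y)
  rw [InnerProductSpace.toDual_apply_apply] at hmain
  have habs := abs_le.mp (by rwa [Real.norm_eq_abs] at hmain)
  nlinarith [habs.2, norm_nonneg (y - x)]

lemma aux_lower_quad {f : E → ℝ} {D : E → E} {Lθ : ℝ} (hLθ : 0 < Lθ)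
    (hconv : ConvexOn ℝ Set.univ f)
    (hgrad : ∀ x, HasGradientAt f (D x) x)
    (hlip : ∀ a b : E, ‖D a - D b‖ ≤ Lθ * ‖a - b‖) (x y : E) :
    f x + ⟪D x, y - x⟫ + (1 / (4 * Lθ)) * ‖D y - D x‖ ^ 2 ≤ f y := by
  set w := y - (1 / (2 * Lθ)) • (D y - D x) with hw
  have h1 := aux_first_order hconv hgrad x w
  have h2 := aux_descent hLθ.le hgrad hlip y w
  have hwy : w - y = -((1 / (2 * Lθ)) • (D y - D x)) := by rw [hw]; module
  have hA : ⟪D x, w - x⟫ = ⟪D x, y - x⟫ + ⟪D x, w - y⟫ := by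
    rw [← inner_add_right]
    congr 1
    abel
  have hB := inner_sub_left (𝕜 := ℝ) (D y) (D x) (w - y)
  have hC : ⟪D y - D x, w - y⟫ = -((1 / (2 * Lθ)) * ‖D y - D x‖ ^ 2) := by
    rw [hwy, inner_neg_right, real_inner_smul_right, real_inner_self_eq_norm_sq]
  have hD : Lθ * ‖w - y‖ ^ 2 = (1 / (4 * Lθ)) * ‖D y - D x‖ ^ 2 := by
    rw [hwy, norm_neg, norm_smul, Real.norm_eq_abs, mul_pow, sq_abs]
    field_simp
    ring
  have hhalf : 1 / (2 * Lθ) * ‖D y - D x‖ ^ 2 = 2 * (1 / (4 * Lθ) * ‖D y - D x‖ ^ 2) := by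
    field_simp
    ring
  linarith

lemma aux_coco {f : E → ℝ} {D : E → E} {Lθ : ℝ} (hLθ : 0 < Lθ)
    (hconv : ConvexOn ℝ Set.univ f)
    (hgrad : ∀ x, HasGradientAt f (D x) x)
    (hlip : ∀ a b : E, ‖D a - D b‖ ≤ Lθ * ‖a - b‖) (x y : E) :
    (1 / (2 * Lθ)) * ‖D y - D x‖ ^ 2 ≤ ⟪D y - D x, y - x⟫ := by
  have h1 := aux_lower_quad hLθ hconv hgrad hlip x y
  have h2 := aux_lower_quad hLθ hconv hgrad hlip y x
  have hnorm : ‖D x - D y‖ = ‖D y - D x‖ := norm_sub_rev _ _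
  rw [hnorm] at h2
  have e1 : ⟪D y, x - y⟫ = -⟪D y, y - x⟫ := by
    rw [← inner_neg_right]
    congr 1
    abel
  have e2 := inner_sub_left (𝕜 := ℝ) (D y) (D x) (y - x)
  have hhalf : 1 / (2 * Lθ) * ‖D y - D x‖ ^ 2 = 2 * (1 / (4 * Lθ) * ‖D y - D x‖ ^ 2) := by
    field_simp
    ring
  linarith

lemma aux_nonexpansive {f : E → ℝ} {D : E → E} {Lθ : ℝ} (hLθ : 0 < Lθ)
    (hconv : ConvexOn ℝ Set.univ f)
    (hgrad : ∀ x, HasGradientAt f (D x) x)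
    (hlip : ∀ a b : E, ‖D a - D b‖ ≤ Lθ * ‖a - b‖)
    {α : ℝ} (hα0 : 0 < α) (hα1 : α ≤ 1 / Lθ) (x y : E) :
    ‖(x - α • D x) - (y - α • D y)‖ ≤ ‖x - y‖ := by
  have hexp : (x - α • D x) - (y - α • D y) = (x - y) - α • (D x - D y) := by module
  rw [hexp]
  have hco : (1 / (2 * Lθ)) * ‖D x - D y‖ ^ 2 ≤ ⟪D x - D y, x - y⟫ :=
    aux_coco hLθ hconv hgrad hlip y x
  have hsq : ‖(x - y) - α • (D x - D y)‖ ^ 2 ≤ ‖x - y‖ ^ 2 := by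
    rw [norm_sub_sq_real]
    have h1 : ⟪x - y, α • (D x - D y)⟫ = α * ⟪D x - D y, x - y⟫ := by
      rw [real_inner_smul_right, real_inner_comm]
    have h2 : ‖α • (D x - D y)‖ ^ 2 = α ^ 2 * ‖D x - D y‖ ^ 2 := by
      rw [norm_smul, Real.norm_eq_abs, mul_pow, sq_abs]
    rw [h1, h2]
    have hαα : α ^ 2 ≤ α * (1 / Lθ) := by nlinarith
    have t1 : α * ((1 / (2 * Lθ)) * ‖D x - D y‖ ^ 2) ≤ α * ⟪D x - D y, x - y⟫ :=
      mul_le_mul_of_nonneg_left hco hα0.le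
    have t2 : α ^ 2 * ‖D x - D y‖ ^ 2 ≤ (α * (1 / Lθ)) * ‖D x - D y‖ ^ 2 :=
      mul_le_mul_of_nonneg_right hαα (sq_nonneg _)
    have t3 : (α * (1 / Lθ)) * ‖D x - D y‖ ^ 2
        = 2 * (α * ((1 / (2 * Lθ)) * ‖D x - D y‖ ^ 2)) := by
      field_simp
    linarith
  nlinarith [norm_nonneg ((x - y) - α • (D x - D y)), norm_nonneg (x - y)]

lemma aux_count {n T : ℕ} (k : Fin T) (j : Fin n) :
    ∑ i : Fin T → Fin n, (if i k = j then (1:ℝ) else 0) = (n:ℝ) ^ (T - 1) := by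
  classical
  set e := Equiv.funSplitAt k (Fin n) with he
  have hcard : Fintype.card {x : Fin T // x ≠ k} = T - 1 := by
    rw [Fintype.card_subtype_compl]
    simp
  have h1 : ∑ i : Fin T → Fin n, (if i k = j then (1:ℝ) else 0)
      = ∑ p : Fin n × ({x : Fin T // x ≠ k} → Fin n), (if (e.symm p) k = j then (1:ℝ) else 0) :=
    (Equiv.sum_comp e.symm _).symm
  have h2 : ∀ p : Fin n × ({x : Fin T // x ≠ k} → Fin n), (e.symm p) k = p.1 := by
    intro p
    simp [he, Equiv.funSplitAt_symm_apply]
  rw [h1]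
  calc ∑ p : Fin n × ({x : Fin T // x ≠ k} → Fin n), (if (e.symm p) k = j then (1:ℝ) else 0)
      = ∑ p : Fin n × ({x : Fin T // x ≠ k} → Fin n), (if p.1 = j then (1:ℝ) else 0) := by
        exact Finset.sum_congr rfl fun p _ => by rw [h2 p]
    _ = ∑ x : Fin n, ∑ _r : {x : Fin T // x ≠ k} → Fin n, (if x = j then (1:ℝ) else 0) := by
        rw [Fintype.sum_prod_type]
    _ = (n:ℝ) ^ (T - 1) := by
        simp [Finset.sum_const, Finset.card_univ, Fintype.card_fun, hcard,
          Finset.sum_ite_eq']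

end aux


/-- Corollary 5.2 (exact attacks): uniform stability of adversarial training with SGD.
The adversarial loss `h θ z = sup_{‖z' - z‖ ≤ ε} g θ z'` is run through SGD with
step sizes `α_t ≤ 1/L_θ`; the resulting uniform stability parameter is
`(2 L L_z ε + 2L²/n) ∑ α_t`. -/
theorem adversarial_training_uniform_stability
    {E : Type*} [NormedAddCommGroup E] [InnerProductSpace ℝ E] [CompleteSpace E]
    {Z : Type*} [NormedAddCommGroup Z] [NormedSpace ℝ Z]
    (ε : ℝ) (hε : 0 < ε)
    (g : E → Z → ℝ) (Dg : E → Z → E) (L Lθ Lz : ℝ)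
    (hL : 0 ≤ L) (hLθ : 0 < Lθ) (hLz : 0 ≤ Lz)
    (hconv : ∀ z : Z, ConvexOn ℝ Set.univ (fun θ => g θ z))
    (hgLip : ∀ (z : Z) (θ1 θ2 : E), |g θ1 z - g θ2 z| ≤ L * ‖θ1 - θ2‖)
    (hgrad : ∀ (z : Z) (θ : E), HasGradientAt (fun θ' => g θ' z) (Dg θ z) θ)
    (hDθ : ∀ (z : Z) (θ1 θ2 : E), ‖Dg θ1 z - Dg θ2 z‖ ≤ Lθ * ‖θ1 - θ2‖)
    (hDz : ∀ (θ : E) (z1 z2 : Z), ‖Dg θ z1 - Dg θ z2‖ ≤ Lz * ‖z1 - z2‖)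
    -- the adversarial loss
    (h : E → Z → ℝ)
    (hdef : ∀ (θ : E) (z : Z),
      h θ z = sSup ((fun z' => g θ z') '' Metric.closedBall z ε))
    -- `a θ z` is a maximizer of `g θ ·` over the closed ε-ball around z
    (a : E → Z → Z)
    (ha : ∀ (θ : E) (z : Z), a θ z ∈ Metric.closedBall z ε ∧
      ∀ z' ∈ Metric.closedBall z ε, g θ z' ≤ g θ (a θ z))
    -- `θ ↦ h θ z` is differentiable with gradient `Dg θ (a θ z)` (Danskin)
    (hgradh : ∀ (z : Z) (θ : E),
      HasGradientAt (fun θ' => h θ' z) (Dg θ (a θ z)) θ)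
    (n T : ℕ) (hn : 0 < n) (hT : 0 < T)
    (S S' : Fin n → Z)
    (hdiff : ∃ j : Fin n, S j ≠ S' j ∧ ∀ i : Fin n, i ≠ j → S i = S' i)
    (θ0 : E) (α : ℕ → ℝ)
    (hα : ∀ t : ℕ, 1 ≤ t → t ≤ T → 0 < α t ∧ α t ≤ 1 / Lθ)
    (θS θS' : (Fin T → Fin n) → ℕ → E)
    (hinitS : ∀ i, θS i 0 = θ0) (hinitS' : ∀ i, θS' i 0 = θ0)
    (hstepS : ∀ (i : Fin T → Fin n) (t : Fin T),
      θS i (t.val + 1) =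
        θS i t.val - α (t.val + 1) • Dg (θS i t.val) (a (θS i t.val) (S (i t))))
    (hstepS' : ∀ (i : Fin T → Fin n) (t : Fin T),
      θS' i (t.val + 1) =
        θS' i t.val - α (t.val + 1) • Dg (θS' i t.val) (a (θS' i t.val) (S' (i t)))) :
    ∀ z : Z,
      (1 / (n : ℝ) ^ T) * ∑ i : Fin T → Fin n, |h (θS i T) z - h (θS' i T) z| ≤
        (2 * L * Lz * ε + 2 * L ^ 2 / n) * ∑ t ∈ Finset.Icc 1 T, α t := by

  classical
  obtain ⟨j, hjne, hjeq⟩ := hdiff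
  have hval : ∀ (θ : E) (z : Z), h θ z = g θ (a θ z) := by
    intro θ z
    rw [hdef]
    apply IsGreatest.csSup_eq
    constructor
    · exact ⟨a θ z, (ha θ z).1, rfl⟩
    · rintro w ⟨z', hz', rfl⟩
      exact (ha θ z).2 z' hz'
  have hhLip : ∀ (z : Z) (θ1 θ2 : E), |h θ1 z - h θ2 z| ≤ L * ‖θ1 - θ2‖ := by
    intro z θ1 θ2
    rw [hval, hval, abs_sub_le_iff]
    constructor
    · have h1 : g θ2 (a θ1 z) ≤ g θ2 (a θ2 z) := (ha θ2 z).2 _ (ha θ1 z).1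
      have h2 : g θ1 (a θ1 z) - g θ2 (a θ1 z) ≤ L * ‖θ1 - θ2‖ :=
        (le_abs_self _).trans (hgLip _ _ _)
      linarith
    · have h1 : g θ1 (a θ2 z) ≤ g θ1 (a θ1 z) := (ha θ1 z).2 _ (ha θ2 z).1
      have h2 : g θ2 (a θ2 z) - g θ1 (a θ2 z) ≤ L * ‖θ2 - θ1‖ :=
        (le_abs_self _).trans (hgLip _ _ _)
      rw [norm_sub_rev] at h2
      linarith
  have hgradbd : ∀ (θ : E) (z : Z), ‖Dg θ z‖ ≤ L := fun θ z =>
    aux_grad_norm_le hL (hgrad z θ) (fun p q => hgLip z p q)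
  have hadist : ∀ (θ1 θ2 : E) (z : Z), ‖a θ1 z - a θ2 z‖ ≤ 2 * ε := by
    intro θ1 θ2 z
    have h1 : dist (a θ1 z) z ≤ ε := Metric.mem_closedBall.mp (ha θ1 z).1
    have h2 : dist (a θ2 z) z ≤ ε := Metric.mem_closedBall.mp (ha θ2 z).1
    rw [← dist_eq_norm]
    calc dist (a θ1 z) (a θ2 z) ≤ dist (a θ1 z) z + dist z (a θ2 z) := dist_triangle _ _ _
      _ ≤ 2 * ε := by rw [dist_comm z]; linarith
  -- one-step bound
  have hstep : ∀ (i : Fin T → Fin n) (t : Fin T),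
      ‖θS i (t.val + 1) - θS' i (t.val + 1)‖ ≤
        ‖θS i t.val - θS' i t.val‖ +
          α (t.val + 1) * (2 * Lz * ε + 2 * L * (if i t = j then 1 else 0)) := by
    intro i t
    have htT := t.isLt
    obtain ⟨hα0, hα1⟩ := hα (t.val + 1) (by omega) (by omega)
    rw [hstepS i t, hstepS' i t]
    set m := t.val with hm
    set x := θS i m with hx
    set y := θS' i m with hy
    by_cases hij : i t = j
    · rw [if_pos hij]
      set u := Dg x (a x (S (i t))) with hu
      set v := Dg y (a y (S' (i t))) with hv
      have b1 : ‖u‖ ≤ L := hgradbd _ _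
      have b2 : ‖v‖ ≤ L := hgradbd _ _
      have hid : (x - α (m + 1) • u) - (y - α (m + 1) • v)
          = (x - y) - α (m + 1) • (u - v) := by module
      rw [hid]
      have hnd : ‖α (m + 1) • (u - v)‖ ≤ α (m + 1) * (2 * L) := by
        rw [norm_smul, Real.norm_eq_abs, abs_of_pos hα0]
        have h2L : ‖u - v‖ ≤ 2 * L := by
          have := norm_sub_le u v
          linarith
        exact mul_le_mul_of_nonneg_left h2L hα0.le
      have htri := norm_sub_le (x - y) (α (m + 1) • (u - v))
      have hLz0 : 0 ≤ α (m + 1) * (2 * Lz * ε) := by positivity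
      have hexp : α (m + 1) * (2 * Lz * ε + 2 * L * 1)
          = α (m + 1) * (2 * Lz * ε) + α (m + 1) * (2 * L) := by ring
      linarith
    · rw [if_neg hij]
      have hzz : S (i t) = S' (i t) := hjeq (i t) hij
      set zb := a x (S (i t)) with hzb
      set zb' := a y (S' (i t)) with hzb'
      have hne := aux_nonexpansive hLθ (hconv zb) (hgrad zb) (hDθ zb) hα0 hα1 x y
      have herr : ‖Dg y zb' - Dg y zb‖ ≤ Lz * (2 * ε) := by
        refine (hDz y _ _).trans ?_
        apply mul_le_mul_of_nonneg_left _ hLz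
        rw [hzb', hzb, ← hzz]
        exact hadist y x (S (i t))
      have hid : (x - α (m + 1) • Dg x zb) - (y - α (m + 1) • Dg y zb')
          = ((x - α (m + 1) • Dg x zb) - (y - α (m + 1) • Dg y zb))
            + α (m + 1) • (Dg y zb' - Dg y zb) := by module
      rw [hid]
      have h2 : ‖α (m + 1) • (Dg y zb' - Dg y zb)‖ ≤ α (m + 1) * (Lz * (2 * ε)) := by
        rw [norm_smul, Real.norm_eq_abs, abs_of_pos hα0]
        exact mul_le_mul_of_nonneg_left herr hα0.le
      have htri := norm_add_le ((x - α (m + 1) • Dg x zb) - (y - α (m + 1) • Dg y zb))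
        (α (m + 1) • (Dg y zb' - Dg y zb))
      have hexp : α (m + 1) * (2 * Lz * ε + 2 * L * 0) = α (m + 1) * (Lz * (2 * ε)) := by
        ring
      linarith
  -- accumulated bound by induction
  have hbound : ∀ m : ℕ, m ≤ T → ∀ i : Fin T → Fin n,
      ‖θS i m - θS' i m‖ ≤ ∑ t ∈ Finset.univ.filter (fun t : Fin T => t.val < m),
        α (t.val + 1) * (2 * Lz * ε + 2 * L * (if i t = j then 1 else 0)) := by
    intro m
    induction m with
    | zero =>
      intro _ i
      simp [hinitS, hinitS']
    | succ m ih =>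
      intro hm i
      have hmT : m < T := hm
      have hstepm := hstep i ⟨m, hmT⟩
      simp only [Fin.val_mk] at hstepm
      have ihm := ih (le_of_lt hmT) i
      have hfilter : Finset.univ.filter (fun t : Fin T => t.val < m + 1)
          = insert (⟨m, hmT⟩ : Fin T) (Finset.univ.filter (fun t : Fin T => t.val < m)) := by
        ext t
        simp only [Finset.mem_filter, Finset.mem_insert, Finset.mem_univ, true_and,
          Fin.ext_iff]
        omega
      rw [hfilter, Finset.sum_insert (by simp)]
      simp only [Fin.val_mk]
      linarith
  intro z
  have hfinal : ∀ i : Fin T → Fin n, ‖θS i T - θS' i T‖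
      ≤ ∑ t : Fin T, α (t.val + 1) * (2 * Lz * ε + 2 * L * (if i t = j then 1 else 0)) := by
    intro i
    have hb := hbound T le_rfl i
    have huniv : Finset.univ.filter (fun t : Fin T => t.val < T) = Finset.univ := by
      ext t
      simp [t.isLt]
    rwa [huniv] at hb
  have hinner : ∀ t : Fin T,
      ∑ i : Fin T → Fin n, α (t.val + 1) * (2 * Lz * ε + 2 * L * (if i t = j then 1 else 0))
        = (2 * Lz * ε * (n:ℝ) ^ T + 2 * L * (n:ℝ) ^ (T - 1)) * α (t.val + 1) := by
    intro t
    have hre : ∀ i : Fin T → Fin n,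
        α (t.val + 1) * (2 * Lz * ε + 2 * L * (if i t = j then 1 else 0))
          = α (t.val + 1) * (2 * Lz * ε)
            + (α (t.val + 1) * (2 * L)) * (if i t = j then 1 else 0) := fun i => by ring
    simp only [hre]
    rw [Finset.sum_add_distrib, Finset.sum_const, ← Finset.mul_sum, aux_count t j,
      Finset.card_univ]
    have hcard : Fintype.card (Fin T → Fin n) = n ^ T := by
      rw [Fintype.card_fun, Fintype.card_fin, Fintype.card_fin]
    rw [hcard]
    push_cast
    ring
  have hIcc : ∑ t : Fin T, α (t.val + 1) = ∑ s ∈ Finset.Icc 1 T, α s := by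
    rw [show Finset.Icc 1 T = Finset.Ico 1 (T + 1) by rw [Finset.Ico_add_one_right_eq_Icc],
      Finset.sum_Ico_eq_sum_range]
    have hT1 : T + 1 - 1 = T := by omega
    rw [hT1, ← Fin.sum_univ_eq_sum_range (fun k => α (1 + k)) T]
    exact Finset.sum_congr rfl fun t _ => by rw [add_comm]
  have hsum1 : ∑ i : Fin T → Fin n, |h (θS i T) z - h (θS' i T) z|
      ≤ (2 * L * Lz * ε * (n:ℝ) ^ T + 2 * L ^ 2 * (n:ℝ) ^ (T - 1))
          * ∑ s ∈ Finset.Icc 1 T, α s := by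
    calc ∑ i : Fin T → Fin n, |h (θS i T) z - h (θS' i T) z|
        ≤ ∑ i : Fin T → Fin n, L * (∑ t : Fin T,
            α (t.val + 1) * (2 * Lz * ε + 2 * L * (if i t = j then 1 else 0))) :=
          Finset.sum_le_sum fun i _ =>
            (hhLip z _ _).trans (mul_le_mul_of_nonneg_left (hfinal i) hL)
      _ = L * ∑ t : Fin T, ∑ i : Fin T → Fin n,
            α (t.val + 1) * (2 * Lz * ε + 2 * L * (if i t = j then 1 else 0)) := by
          rw [← Finset.mul_sum, Finset.sum_comm]
      _ = L * ∑ t : Fin T, (2 * Lz * ε * (n:ℝ) ^ T + 2 * L * (n:ℝ) ^ (T - 1)) * α (t.val + 1) := by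
          rw [Finset.sum_congr rfl fun t _ => hinner t]
      _ = L * ((2 * Lz * ε * (n:ℝ) ^ T + 2 * L * (n:ℝ) ^ (T - 1)) * ∑ t : Fin T, α (t.val + 1)) := by
          simp [Finset.mul_sum]
      _ = (2 * L * Lz * ε * (n:ℝ) ^ T + 2 * L ^ 2 * (n:ℝ) ^ (T - 1))
            * ∑ s ∈ Finset.Icc 1 T, α s := by
          rw [hIcc]; ring
  have hnR : (0:ℝ) < n := by exact_mod_cast hn
  have hne1 : (n:ℝ) ≠ 0 := hnR.ne'
  have hpow : (n:ℝ) ^ T = (n:ℝ) ^ (T - 1) * n := by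
    rw [← pow_succ]
    congr 1
    omega
  have hpT : (0:ℝ) < (n:ℝ) ^ T := pow_pos hnR T
  calc (1 / (n:ℝ) ^ T) * ∑ i : Fin T → Fin n, |h (θS i T) z - h (θS' i T) z|
      ≤ (1 / (n:ℝ) ^ T) * ((2 * L * Lz * ε * (n:ℝ) ^ T + 2 * L ^ 2 * (n:ℝ) ^ (T - 1))
          * ∑ s ∈ Finset.Icc 1 T, α s) :=
        mul_le_mul_of_nonneg_left hsum1 (by positivity)
    _ = (2 * L * Lz * ε + 2 * L ^ 2 / n) * ∑ s ∈ Finset.Icc 1 T, α s := by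
        rw [hpow]
        have hne2 : (n:ℝ) ^ (T - 1) ≠ 0 := pow_ne_zero _ hne1
        field_simp
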